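/- The system of six ODEs F₁₂' = −[(F₁₂F₂₃−F₁₂F₁₃)z − F₁₂F₂₃ + F₃₂F₁₃]/(z(z−1)), F₂₁' = [(F₂₁F₂₃−F₂₁F₁₃)z + F₂₃F₃₁ − F₂₃F₂₁]/(z(z−1)), F₁₃' = −F₁₂', F₃₁' = −[(−F₃₁F₁₂+F₂₁F₃₂)z + F₃₁F₃₂ − F₂₁F₃₂]/(z(z−1)), F₂₃' = −F₂₁', F₃₂' = −F₃₁' admits the first integrals I₁ = F₁₂+F₁₃, I₂ = F₂₃+F₂₁, I₃ = F₃₁+F₃₂, and I₄ = F₃₁F₁₃ + F₁₂F₂₁ + F₂₃F₃₂; i.e., each of I₁,…,I₄ has zero derivative along any solution. -/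

import Mathlib

/-- the six-component ODE system admits the first integrals
`I₁ = F₁₂+F₁₃`, `I₂ = F₂₃+F₂₁`, `I₃ = F₃₁+F₃₂`, `I₄ = F₃₁F₁₃+F₁₂F₂₁+F₂₃F₃₂`:
each has zero derivative along any solution. -/
theorem stmt11 (F12 F21 F13 F31 F23 F32 : ℝ → ℝ) (S : Set ℝ)
    (hS : ∀ z ∈ S, z ≠ 0 ∧ z ≠ 1)
    (hode : ∀ z ∈ S,
      HasDerivAt F12 (-(((F12 z * F23 z - F12 z * F13 z) * z - F12 z * F23 z
        + F32 z * F13 z) / (z * (z - 1)))) z ∧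
      HasDerivAt F21 (((F21 z * F23 z - F21 z * F13 z) * z + F23 z * F31 z
        - F23 z * F21 z) / (z * (z - 1))) z ∧
      HasDerivAt F13 (((F12 z * F23 z - F12 z * F13 z) * z - F12 z * F23 z
        + F32 z * F13 z) / (z * (z - 1))) z ∧
      HasDerivAt F31 (-(((-(F31 z * F12 z) + F21 z * F32 z) * z + F31 z * F32 z
        - F21 z * F32 z) / (z * (z - 1)))) z ∧
      HasDerivAt F23 (-(((F21 z * F23 z - F21 z * F13 z) * z + F23 z * F31 z
        - F23 z * F21 z) / (z * (z - 1)))) z ∧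
      HasDerivAt F32 (((-(F31 z * F12 z) + F21 z * F32 z) * z + F31 z * F32 z
        - F21 z * F32 z) / (z * (z - 1))) z) :
    ∀ z ∈ S,
      HasDerivAt (fun t => F12 t + F13 t) 0 z ∧
      HasDerivAt (fun t => F23 t + F21 t) 0 z ∧
      HasDerivAt (fun t => F31 t + F32 t) 0 z ∧
      HasDerivAt (fun t => F31 t * F13 t + F12 t * F21 t + F23 t * F32 t) 0 z := by
  intro z hz
  obtain ⟨hz0, hz1⟩ := hS z hz
  obtain ⟨h1, h2, h3, h4, h5, h6⟩ := hode z hz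
  have hz1' : z - 1 ≠ 0 := sub_ne_zero.2 hz1
  refine ⟨(h1.add h3).congr_deriv (by ring), (h5.add h2).congr_deriv (by ring), (h4.add h6).congr_deriv (by ring), ?_⟩
  have := ((h4.mul h3).add (h1.mul h2)).add (h5.mul h6)
  refine this.congr_deriv ?_
  field_simp
  ring
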